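/- Let r_g, r_h be positive natural numbers and N ∈ ℕ with N > 10. If the intervals [r_g^N − r_g^{N/10} − r_g, r_g^N + r_g] and [r_h^N − r_h^{N/10} − r_h, r_h^N + r_h] have non-empty intersection, then r_g = r_h. -/
import Mathlib

lemma stmt_5_key (a b N : ℕ) (ha : 1 ≤ a) (hab : a < b) (hN : 10 < N) :
    (a : ℝ) ^ N + a < (b : ℝ) ^ N - (b : ℝ) ^ ((N : ℝ) / 10) - b := by
  have hb2 : (2 : ℝ) ≤ b := by
    have h2 : 2 ≤ b := by omega
    exact_mod_cast h2
  have hNr : (11 : ℝ) ≤ (N : ℝ) := by exact_mod_cast hN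
  have hA : (a : ℝ) ≤ (b : ℝ) - 1 := by
    have : (a : ℝ) + 1 ≤ b := by exact_mod_cast hab
    linarith
  have ha0 : (0 : ℝ) ≤ a := by positivity
  have hrpow : (b : ℝ) ^ ((N : ℝ) / 10) ≤ (b : ℝ) ^ (N - 2) := by
    rw [← Real.rpow_natCast (b : ℝ) (N - 2)]
    apply Real.rpow_le_rpow_of_exponent_le (by linarith)
    have : ((N - 2 : ℕ) : ℝ) = (N : ℝ) - 2 := by
      have : 2 ≤ N := by omega
      push_cast [this]; ring
    rw [this]; linarith
  have haN : (a : ℝ) ^ N ≤ ((b : ℝ) - 1) * (b : ℝ) ^ (N - 1) := by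
    calc (a : ℝ) ^ N ≤ ((b : ℝ) - 1) ^ N := pow_le_pow_left₀ ha0 hA N
    _ = ((b : ℝ) - 1) * ((b : ℝ) - 1) ^ (N - 1) := by
        rw [← pow_succ']; congr 1; omega
    _ ≤ ((b : ℝ) - 1) * (b : ℝ) ^ (N - 1) := by
        apply mul_le_mul_of_nonneg_left (pow_le_pow_left₀ (by linarith) (by linarith) _)
          (by linarith)
  have hsplit : (b : ℝ) ^ N = ((b : ℝ) - 1) * (b : ℝ) ^ (N - 1) + (b : ℝ) ^ (N - 1) := by
    have : (b : ℝ) ^ N = (b : ℝ) * (b : ℝ) ^ (N - 1) := by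
      rw [← pow_succ']; congr 1; omega
    rw [this]; ring
  have hsplit2 : (b : ℝ) ^ (N - 1) = (b : ℝ) * (b : ℝ) ^ (N - 2) := by
    rw [← pow_succ']; congr 1; omega
  have hbN2 : (b : ℝ) ^ 2 ≤ (b : ℝ) ^ (N - 2) :=
    pow_le_pow_right₀ (by linarith) (by omega)
  have hpos : (0 : ℝ) ≤ (b : ℝ) ^ (N - 2) := by positivity
  nlinarith [sq_nonneg ((b : ℝ) - 2), mul_le_mul_of_nonneg_right hb2 hpos]

/-- If the intervals `[r_g^N − r_g^{N/10} − r_g, r_g^N + r_g]` and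
`[r_h^N − r_h^{N/10} − r_h, r_h^N + r_h]` intersect (with `N > 10`),
then `r_g = r_h`. -/
theorem stmt_5 (rg rh N : ℕ) (hg : 1 ≤ rg) (hh : 1 ≤ rh) (hN : 10 < N)
    (hmeet : ∃ x : ℝ,
      ((rg : ℝ) ^ N - (rg : ℝ) ^ ((N : ℝ) / 10) - rg ≤ x ∧ x ≤ (rg : ℝ) ^ N + rg) ∧
      ((rh : ℝ) ^ N - (rh : ℝ) ^ ((N : ℝ) / 10) - rh ≤ x ∧ x ≤ (rh : ℝ) ^ N + rh)) :
    rg = rh := by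
  obtain ⟨x, ⟨hg1, hg2⟩, ⟨hh1, hh2⟩⟩ := hmeet
  rcases lt_trichotomy rg rh with h | h | h
  · exact absurd (stmt_5_key rg rh N hg h hN) (by linarith)
  · exact h
  · exact absurd (stmt_5_key rh rg N hh h hN) (by linarith)
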